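/- In a triangulated category D, if H_1 → H_2 → ... → H_{n+1} is a sequence of morphisms between cohomological functors D^op → Ab, and X is a subcategory of D such that each morphism F_i : H_i → H_{i+1} vanishes on thick^1_D(X) = smd(add^Σ(X)), then the composite F_n ∘ ... ∘ F_1 vanishes on the n-th thickening thick^n_D(X) = smd((add^Σ(X))^{*n}). -/

import Mathlib

open CategoryTheory Limits Pretriangulated

namespace Paper

variable {D : Type*} [Category D] [HasZeroObject D] [HasShift D ℤ]
  [Preadditive D] [∀ n : ℤ, (CategoryTheory.shiftFunctor D n).Additive] [Pretriangulated D]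

/-- `X` is a retract (direct summand) of `Y`. -/
def IsRetractOf (X Y : D) : Prop := ∃ (i : X ⟶ Y) (r : Y ⟶ X), i ≫ r = 𝟙 X

/-- The smallest strict full subcategory containing `P` that is closed under
finite direct sums and all shifts. -/
inductive addShift (P : D → Prop) : D → Prop
  | of {X : D} (hX : P X) : addShift P X
  | iso {X Y : D} (e : X ≅ Y) (hX : addShift P X) : addShift P Y
  | shift {X : D} (n : ℤ) (hX : addShift P X) : addShift P (X⟦n⟧)
  | zero {X : D} (hX : IsZero X) : addShift P X
  | sum {X Y Z : D} (hX : addShift P X) (hY : addShift P Y)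
      (b : BinaryBicone X Y) (hb : b.IsBilimit) (e : Z ≅ b.pt) : addShift P Z

/-- Closure of `P` under retracts (direct summands). -/
def smd (P : D → Prop) : D → Prop := fun X => ∃ Y, P Y ∧ IsRetractOf X Y

/-- `P * Q` : objects `L` occurring in a distinguished triangle `M → L → N → ΣM`
with `M ∈ P` and `N ∈ Q`. -/
def star (P Q : D → Prop) : D → Prop := fun L =>
  ∃ (M N : D) (f : M ⟶ L) (g : L ⟶ N) (h : N ⟶ M⟦(1 : ℤ)⟧),
    P M ∧ Q N ∧ Triangle.mk f g h ∈ distTriang D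

/-- `(add^Σ P)^{* n}`, with the convention that the `0`-th power consists of
the zero objects. -/
def starPow (P : D → Prop) : ℕ → D → Prop
  | 0 => fun X => IsZero X
  | n + 1 => star (starPow P n) (addShift P)

/-- The `n`-th thickening `thick^n(P) = smd ((add^Σ P)^{* n})`. -/
def thick (P : D → Prop) (n : ℕ) : D → Prop := smd (starPow P n)

/-- The level of `M` with respect to `P` : the least `n` with `M ∈ thick^n(P)`. -/
noncomputable def level (P : D → Prop) (M : D) : ℕ∞ :=
  sInf {n : ℕ∞ | ∃ k : ℕ, n = (k : ℕ∞) ∧ thick P k M}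

end Paper

namespace Paper

open Opposite

variable {D : Type*} [Category D] [HasZeroObject D] [HasShift D ℤ]
  [Preadditive D] [∀ n : ℤ, (CategoryTheory.shiftFunctor D n).Additive] [Pretriangulated D]

/-- A cohomological functor sends distinguished triangles to exact sequences. -/
def IsCohomological (H : Dᵒᵖ ⥤ AddCommGrpCat) : Prop :=
  ∀ T ∈ distTriang D, Function.Exact ⇑(H.map T.mor₂.op) ⇑(H.map T.mor₁.op)

/-- The composite `F_n ∘ ⋯ ∘ F_1 : H_0 ⟶ H_n` of a sequence of natural
transformations. -/
def compNat (H : ℕ → (Dᵒᵖ ⥤ AddCommGrpCat)) (F : ∀ i, H i ⟶ H (i + 1)) : ∀ n, H 0 ⟶ H n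
  | 0 => 𝟙 (H 0)
  | n + 1 => compNat H F n ≫ F n

open ZeroObject in
/-- **The Ghost Lemma.** If each `F i` vanishes on `thick¹(Xs)`, then the composite
of `n` of them vanishes on `thickⁿ(Xs)`. -/
theorem ghost_lemma (n : ℕ) (H : ℕ → (Dᵒᵖ ⥤ AddCommGrpCat)) (F : ∀ i, H i ⟶ H (i + 1))
    (hcoh : ∀ i, IsCohomological (H i)) (hadd : ∀ i, (H i).Additive)
    (Xs : D → Prop)
    (hvan : ∀ i, ∀ M : D, thick Xs 1 M → (F i).app (op M) = 0) :
    ∀ M : D, thick Xs n M → (compNat H F n).app (op M) = 0 := by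
  induction n with
  | zero =>
    intro M hM
    obtain ⟨Y, hY, i, r, hir⟩ := hM
    have hMz : IsZero M := by
      rw [IsZero.iff_id_eq_zero, ← hir, hY.eq_of_src r 0, comp_zero]
    have := hadd 0
    have hz : IsZero ((H 0).obj (op M)) := (H 0).map_isZero hMz.op
    exact hz.eq_of_src _ _
  | succ n ih =>
    intro M hM
    obtain ⟨L, hL, i, r, hir⟩ := hM
    suffices hLv : (compNat H F (n + 1)).app (op L) = 0 by
      have hnat := (compNat H F (n + 1)).naturality i.op
      calc (compNat H F (n + 1)).app (op M)
          = (H 0).map r.op ≫ (H 0).map i.op ≫ (compNat H F (n + 1)).app (op M) := by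
            rw [← Category.assoc, ← Functor.map_comp, ← op_comp, hir, op_id,
              CategoryTheory.Functor.map_id, Category.id_comp]
        _ = (H 0).map r.op ≫ (compNat H F (n + 1)).app (op L) ≫ (H (n + 1)).map i.op := by
            rw [hnat]
        _ = 0 := by rw [hLv, zero_comp, comp_zero]
    obtain ⟨M', N, f, g, h, hM', hN, hT⟩ := hL
    ext x
    have hMn : (compNat H F n).app (op M') = 0 :=
      ih M' ⟨M', hM', 𝟙 _, 𝟙 _, Category.id_comp _⟩
    have hexact := hcoh n _ hT
    have h1 : (H n).map f.op ((compNat H F n).app (op L) x) = 0 := by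
      have hn := ConcreteCategory.congr_hom ((compNat H F n).naturality f.op) x
      simp only [comp_apply] at hn
      rw [← hn, hMn]
      rfl
    obtain ⟨z, hz⟩ := (hexact _).mp h1
    have hz' : ((H n).map g.op) z = (compNat H F n).app (op L) x := hz
    have hNvan : (F n).app (op N) = 0 := hvan n N
      ⟨N, ⟨0, N, 0, 𝟙 N, 0, isZero_zero D, hN, contractible_distinguished₁ N⟩,
        𝟙 N, 𝟙 N, Category.id_comp _⟩
    have hn2 := ConcreteCategory.congr_hom ((F n).naturality g.op) z
    show (F n).app (op L) ((compNat H F n).app (op L) x) = 0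
    have hcomp : (H n).map g.op ≫ (F n).app (op L) = 0 := by
      rw [(F n).naturality g.op, hNvan, zero_comp]
    rw [← hz']
    have h3 := ConcreteCategory.congr_hom hcomp z
    exact h3.trans rfl


end Paper
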